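/- Let N = n+m and suppose the square matrix [X; U] ∈ ℝ^{(n+m)×(n+m)} (X stacked on top of U) is invertible. Suppose there exist a symmetric P ∈ ℝ^{n×n} and τ > 0 such that the block matrix [[B_wᵀPB_w + τQ_w, −B_wᵀPX₊ + τS_w],[(−B_wᵀPX₊ + τS_w)ᵀ, M(P) + τR_w]] ⪯ 0 (negative semidefinite). Then every (A_d, B_d) ∈ Σ_{X,U} is such that the system x_{k+1} = A_d x_k + B_d u_k, y_k = C x_k + D u_k is (Q,S,R)-dissipative, with quadratic storage function V(x) = xᵀPx. -/

import Mathlib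

open Matrix

/-- `M ⪯ 0`: a real matrix is negative semidefinite iff `-M` is positive semidefinite. -/
def Matrix.NegSemidef {k : Type*} [Fintype k] (M : Matrix k k ℝ) : Prop :=
  (-M).PosSemidef

/-- Quadratic supply rate `s(u,y) = uᵀRu + uᵀSᵀy + yᵀSu + yᵀQy`. -/
noncomputable def supplyRate {m p : ℕ} (R : Matrix (Fin m) (Fin m) ℝ)
    (S : Matrix (Fin p) (Fin m) ℝ) (Q : Matrix (Fin p) (Fin p) ℝ)
    (u : Fin m → ℝ) (y : Fin p → ℝ) : ℝ :=
  u ⬝ᵥ R.mulVec u + u ⬝ᵥ Sᵀ.mulVec y + y ⬝ᵥ S.mulVec u + y ⬝ᵥ Q.mulVec y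

/-- The data-dependent matrix `M(P)` (columns indexed by an arbitrary finite type `ι`
of cardinality `N`). -/
noncomputable def dataMatrixM {n m p : ℕ} {ι : Type*} [Fintype ι]
    (C : Matrix (Fin p) (Fin n) ℝ) (D : Matrix (Fin p) (Fin m) ℝ)
    (R : Matrix (Fin m) (Fin m) ℝ) (S : Matrix (Fin p) (Fin m) ℝ)
    (Q : Matrix (Fin p) (Fin p) ℝ)
    (X Xp : Matrix (Fin n) ι ℝ) (U : Matrix (Fin m) ι ℝ)
    (P : Matrix (Fin n) (Fin n) ℝ) : Matrix ι ι ℝ :=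
  Xpᵀ * P * Xp - Xᵀ * P * X -
    (Uᵀ * R * U + Uᵀ * Sᵀ * (C * X + D * U) + (C * X + D * U)ᵀ * S * U
      + (C * X + D * U)ᵀ * Q * (C * X + D * U))

/-- Membership in the noise set `𝒲`. -/
def inNoiseSet {mw : ℕ} {ι : Type*} [Fintype ι]
    (Qw : Matrix (Fin mw) (Fin mw) ℝ) (Sw : Matrix (Fin mw) ι ℝ)
    (Rw : Matrix ι ι ℝ) (W : Matrix (Fin mw) ι ℝ) : Prop :=
  (Wᵀ * Qw * W + Wᵀ * Sw + Swᵀ * W + Rw).PosSemidef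

/-- Membership `(A_d, B_d) ∈ Σ_{X,U}`. -/
def inConsistentSet {n m mw : ℕ} {ι : Type*} [Fintype ι]
    (X Xp : Matrix (Fin n) ι ℝ) (U : Matrix (Fin m) ι ℝ)
    (Bw : Matrix (Fin n) (Fin mw) ℝ)
    (Qw : Matrix (Fin mw) (Fin mw) ℝ) (Sw : Matrix (Fin mw) ι ℝ)
    (Rw : Matrix ι ι ℝ)
    (Ad : Matrix (Fin n) (Fin n) ℝ) (Bd : Matrix (Fin n) (Fin m) ℝ) : Prop :=
  ∃ W : Matrix (Fin mw) ι ℝ,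
    inNoiseSet Qw Sw Rw W ∧ Xp = Ad * X + Bd * U + Bw * W

private lemma dp2 {α β γ : Type*} [Fintype α] [Fintype β] [Fintype γ]
    (A : Matrix α β ℝ) (B : Matrix α γ ℝ) (v : β → ℝ) (w : γ → ℝ) :
    v ⬝ᵥ (Aᵀ * B) *ᵥ w = (A *ᵥ v) ⬝ᵥ (B *ᵥ w) := by
  rw [← mulVec_mulVec, dotProduct_mulVec, vecMul_transpose]

private lemma dp3 {α β γ δ : Type*} [Fintype α] [Fintype β] [Fintype γ] [Fintype δ]
    (A : Matrix α β ℝ) (M : Matrix α δ ℝ) (B : Matrix δ γ ℝ) (v : β → ℝ) (w : γ → ℝ) :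
    v ⬝ᵥ (Aᵀ * M * B) *ᵥ w = (A *ᵥ v) ⬝ᵥ M *ᵥ (B *ᵥ w) := by
  rw [Matrix.mul_assoc, dp2, ← mulVec_mulVec]

theorem square_data_noise_lmi_implies_robust_dissipativity {n m p mw : ℕ}
    (C : Matrix (Fin p) (Fin n) ℝ) (D : Matrix (Fin p) (Fin m) ℝ)
    (R : Matrix (Fin m) (Fin m) ℝ) (S : Matrix (Fin p) (Fin m) ℝ)
    (Q : Matrix (Fin p) (Fin p) ℝ) (hR : R.IsSymm) (hQ : Q.IsSymm)
    (X Xp : Matrix (Fin n) (Fin n ⊕ Fin m) ℝ)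
    (U : Matrix (Fin m) (Fin n ⊕ Fin m) ℝ)
    (Bw : Matrix (Fin n) (Fin mw) ℝ)
    (Qw : Matrix (Fin mw) (Fin mw) ℝ)
    (Sw : Matrix (Fin mw) (Fin n ⊕ Fin m) ℝ)
    (Rw : Matrix (Fin n ⊕ Fin m) (Fin n ⊕ Fin m) ℝ)
    (hQw : Qw.IsSymm) (hRw : Rw.PosDef)
    (hH : IsUnit (Matrix.fromRows X U))
    (P : Matrix (Fin n) (Fin n) ℝ) (hP : P.IsSymm) (τ : ℝ) (hτ : 0 < τ)
    (hLMI : (Matrix.fromBlocks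
        (Bwᵀ * P * Bw + τ • Qw) (-(Bwᵀ * P * Xp) + τ • Sw)
        (-(Bwᵀ * P * Xp) + τ • Sw)ᵀ
        (dataMatrixM C D R S Q X Xp U P + τ • Rw)).NegSemidef) :
    ∀ (Ad : Matrix (Fin n) (Fin n) ℝ) (Bd : Matrix (Fin n) (Fin m) ℝ),
      inConsistentSet X Xp U Bw Qw Sw Rw Ad Bd →
      ∀ (u : ℕ → Fin m → ℝ) (x : ℕ → Fin n → ℝ),
        (∀ k : ℕ, x (k + 1) = Ad.mulVec (x k) + Bd.mulVec (u k)) →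
        ∀ k₂ k₁ : ℕ, k₂ < k₁ →
          (x k₁) ⬝ᵥ P.mulVec (x k₁) - (x k₂) ⬝ᵥ P.mulVec (x k₂)
            ≤ ∑ i ∈ Finset.Ico k₂ k₁,
                supplyRate R S Q (u i) (C.mulVec (x i) + D.mulVec (u i)) := by
  intro Ad Bd hmem u x hdyn k₂ k₁ hk
  obtain ⟨W, hW, hXp⟩ := hmem
  have step : ∀ (xv : Fin n → ℝ) (uv : Fin m → ℝ),
      (Ad *ᵥ xv + Bd *ᵥ uv) ⬝ᵥ P *ᵥ (Ad *ᵥ xv + Bd *ᵥ uv) - xv ⬝ᵥ P *ᵥ xv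
        ≤ supplyRate R S Q uv (C *ᵥ xv + D *ᵥ uv) := by
    intro xv uv
    set H := Matrix.fromRows X U with hHdef
    have hdet : IsUnit H.det := (Matrix.isUnit_iff_isUnit_det H).mp hH
    set ξ : (Fin n ⊕ Fin m) → ℝ := H⁻¹ *ᵥ (Sum.elim xv uv) with hξdef
    have hHξ : H *ᵥ ξ = Sum.elim xv uv := by
      rw [hξdef, mulVec_mulVec, Matrix.mul_nonsing_inv H hdet, one_mulVec]
    have hXξ : X *ᵥ ξ = xv := by
      funext i
      have := congrFun hHξ (Sum.inl i)
      simpa [hHdef, Matrix.fromRows_mulVec] using this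
    have hUξ : U *ᵥ ξ = uv := by
      funext i
      have := congrFun hHξ (Sum.inr i)
      simpa [hHdef, Matrix.fromRows_mulVec] using this
    set w0 : Fin mw → ℝ := W *ᵥ ξ with hw0
    set a : Fin n → ℝ := Xp *ᵥ ξ with ha
    set b : Fin n → ℝ := Bw *ᵥ w0 with hb
    set y : Fin p → ℝ := C *ᵥ xv + D *ᵥ uv with hy
    -- the consistency relation in vector form
    have hab : Ad *ᵥ xv + Bd *ᵥ uv = a - b := by
      have : Xp *ᵥ ξ = Ad *ᵥ xv + Bd *ᵥ uv + b := by
        rw [hXp]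
        simp only [add_mulVec, ← mulVec_mulVec, hXξ, hUξ, hb, hw0]
      rw [ha, this]; abel
    -- the CX + DU relation in vector form
    have hyξ : (C * X + D * U) *ᵥ ξ = y := by
      simp only [add_mulVec, ← mulVec_mulVec, hXξ, hUξ, hy]
    -- data matrix quadratic form
    have hM : ξ ⬝ᵥ (dataMatrixM C D R S Q X Xp U P) *ᵥ ξ
        = a ⬝ᵥ P *ᵥ a - xv ⬝ᵥ P *ᵥ xv - supplyRate R S Q uv y := by
      simp only [dataMatrixM, sub_mulVec, add_mulVec, dotProduct_sub, dotProduct_add]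
      rw [dp3 Xp P Xp, dp3 X P X, dp3 U R U, dp3 U Sᵀ (C * X + D * U),
        dp3 (C * X + D * U) S U, dp3 (C * X + D * U) Q (C * X + D * U), hXξ, hUξ, hyξ]
      simp only [supplyRate]
      try ring
    -- LMI quadratic form at (w0, ξ)
    have h1 : (Sum.elim w0 ξ) ⬝ᵥ (Matrix.fromBlocks
        (Bwᵀ * P * Bw + τ • Qw) (-(Bwᵀ * P * Xp) + τ • Sw)
        (-(Bwᵀ * P * Xp) + τ • Sw)ᵀ
        (dataMatrixM C D R S Q X Xp U P + τ • Rw)) *ᵥ (Sum.elim w0 ξ) ≤ 0 := by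
      have := Matrix.PosSemidef.dotProduct_mulVec_nonneg hLMI (Sum.elim w0 ξ)
      rw [neg_mulVec, dotProduct_neg] at this
      have h' : 0 ≤ -((Sum.elim w0 ξ) ⬝ᵥ (Matrix.fromBlocks
        (Bwᵀ * P * Bw + τ • Qw) (-(Bwᵀ * P * Xp) + τ • Sw)
        (-(Bwᵀ * P * Xp) + τ • Sw)ᵀ
        (dataMatrixM C D R S Q X Xp U P + τ • Rw)) *ᵥ (Sum.elim w0 ξ)) := by
        simpa using this
      linarith
    rw [Matrix.fromBlocks_mulVec] at h1
    simp only [Sum.elim_comp_inl, Sum.elim_comp_inr, sumElim_dotProduct_sumElim,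
      dotProduct_add, add_mulVec, neg_mulVec, dotProduct_neg, smul_mulVec,
      dotProduct_smul, transpose_add, transpose_neg, transpose_smul, transpose_mul,
      transpose_transpose] at h1
    have e3 : ξ ⬝ᵥ (Xpᵀ * (Pᵀ * Bw)) *ᵥ w0 = a ⬝ᵥ P *ᵥ b := by
      rw [← Matrix.mul_assoc, hP.eq, dp3 Xp P Bw]
    have e5 : ξ ⬝ᵥ Swᵀ *ᵥ w0 = (Sw *ᵥ ξ) ⬝ᵥ w0 := by
      rw [dotProduct_mulVec, vecMul_transpose]
    rw [hM, dp3 Bw P Bw, dp3 Bw P Xp, e3, e5] at h1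
    -- noise inequality
    have h2 : 0 ≤ ξ ⬝ᵥ (Wᵀ * Qw * W + Wᵀ * Sw + Swᵀ * W + Rw) *ᵥ ξ := by
      simpa using Matrix.PosSemidef.dotProduct_mulVec_nonneg hW ξ
    simp only [add_mulVec, dotProduct_add] at h2
    rw [dp3 W Qw W, dp2 W Sw, dp2 Sw W] at h2
    have hτ2 : 0 ≤ τ * ((W *ᵥ ξ) ⬝ᵥ Qw *ᵥ (W *ᵥ ξ) + (W *ᵥ ξ) ⬝ᵥ Sw *ᵥ ξ
        + (Sw *ᵥ ξ) ⬝ᵥ (W *ᵥ ξ) + ξ ⬝ᵥ Rw *ᵥ ξ) := mul_nonneg hτ.le h2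
    rw [hab, Matrix.mulVec_sub, dotProduct_sub, sub_dotProduct, sub_dotProduct]
    rw [← hw0] at hτ2
    rw [← hb, ← ha] at h1
    simp only [smul_eq_mul] at h1
    linarith
  -- telescoping
  induction k₁, hk using Nat.le_induction with
  | base =>
    rw [Finset.sum_Ico_succ_top (le_refl k₂), Finset.Ico_self, Finset.sum_empty, zero_add,
      hdyn k₂]
    exact step (x k₂) (u k₂)
  | succ k₁ hk ih =>
    rw [Finset.sum_Ico_succ_top (by omega : k₂ ≤ k₁)]
    have := step (x k₁) (u k₁)
    rw [← hdyn k₁] at this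
    linarith
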